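/- Let h : (0,∞) → ℝ satisfy h(x) = h(1/x) for all x ∈ (0,∞). Then h is convex on (0,∞) if and only if the restriction of h to [1,∞) is convex and nondecreasing. -/

import Mathlib

open Matrix MeasureTheory Set

noncomputable section

/-- The space of real 2×2 matrices. -/
abbrev Mat2 := Matrix (Fin 2) (Fin 2) ℝ

/-- Squared Frobenius norm of a 2×2 matrix. -/
def frobSq (F : Mat2) : ℝ := ∑ i, ∑ j, (F i j) ^ 2

/-- The special orthogonal group SO(2). -/
def SO2 (R : Mat2) : Prop := R.transpose * R = 1 ∧ R.det = 1

/-- The conformal special orthogonal group CSO(2) = (0,∞)·SO(2). -/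
def CSO2 (A : Mat2) : Prop := ∃ a : ℝ, 0 < a ∧ ∃ R : Mat2, SO2 R ∧ A = a • R

/-- Conformal invariance of an energy `W : GL⁺(2) → ℝ`. -/
def ConfInv (W : Mat2 → ℝ) : Prop :=
  ∀ F : Mat2, 0 < F.det → ∀ A B : Mat2, CSO2 A → CSO2 B → W (A * F * B) = W F

/-- `l1, l2` are the singular values of `F` (in either order): they are positive and their
product and sum of squares agree with `det F` and the squared Frobenius norm of `F`. -/
def SingVals (F : Mat2) (l1 l2 : ℝ) : Prop :=
  0 < l1 ∧ 0 < l2 ∧ l1 * l2 = F.det ∧ l1 ^ 2 + l2 ^ 2 = frobSq F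

/-- `l1 ≥ l2` are the ordered singular values of `F`. -/
def OrdSingVals (F : Mat2) (l1 l2 : ℝ) : Prop := SingVals F l1 l2 ∧ l2 ≤ l1

/-- The larger singular value of a 2×2 matrix with positive determinant. -/
def sv1 (F : Mat2) : ℝ :=
  Real.sqrt ((frobSq F + Real.sqrt (frobSq F ^ 2 - 4 * F.det ^ 2)) / 2)

/-- The smaller singular value of a 2×2 matrix with positive determinant. -/
def sv2 (F : Mat2) : ℝ :=
  Real.sqrt ((frobSq F - Real.sqrt (frobSq F ^ 2 - 4 * F.det ^ 2)) / 2)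

/-- The distortion 𝕂(F) = ‖F‖²/(2 det F). -/
def Kdist (F : Mat2) : ℝ := frobSq F / (2 * F.det)

/-- Rank-one convexity of an energy on GL⁺(2). -/
def RankOneConvex (W : Mat2 → ℝ) : Prop :=
  ∀ F : Mat2, 0 < F.det → ∀ H : Mat2, H.rank = 1 → 0 < (F + H).det →
    ∀ t : ℝ, 0 ≤ t → t ≤ 1 → W (F + t • H) ≤ (1 - t) * W F + t * W (F + H)

/-- The gradient (Jacobian matrix) of a map ϑ : ℝ² → ℝ². -/
def gradMat (ϑ : (Fin 2 → ℝ) → (Fin 2 → ℝ)) (x : Fin 2 → ℝ) : Mat2 :=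
  Matrix.of fun i j => fderiv ℝ ϑ x (Pi.single j 1) i

/-- Quasiconvexity of an energy on GL⁺(2). -/
def Quasiconvex2 (W : Mat2 → ℝ) : Prop :=
  ∀ Ω : Set (Fin 2 → ℝ), IsOpen Ω → Bornology.IsBounded Ω →
    ∀ F₀ : Mat2, 0 < F₀.det →
    ∀ ϑ : (Fin 2 → ℝ) → (Fin 2 → ℝ), ContDiff ℝ (⊤ : ℕ∞) ϑ → HasCompactSupport ϑ →
      tsupport ϑ ⊆ Ω → (∀ x ∈ Ω, 0 < (F₀ + gradMat ϑ x).det) →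
      W F₀ * (volume Ω).toReal ≤ ∫ x in Ω, W (F₀ + gradMat ϑ x)

/-- Polyconvexity of an energy on GL⁺(2): `W(F) = P(F, det F)` for some convex
function `P : ℝ^{2×2} × ℝ → ℝ ∪ {+∞}`. -/
def Polyconvex (W : Mat2 → ℝ) : Prop :=
  ∃ P : Mat2 × ℝ → EReal,
    (∀ X Y : Mat2 × ℝ, ∀ t : ℝ, 0 ≤ t → t ≤ 1 →
      P (t • X + (1 - t) • Y) ≤ (t : ℝ) * P X + ((1 - t : ℝ) : EReal) * P Y) ∧
    (∀ F : Mat2, 0 < F.det → (W F : EReal) = P (F, F.det))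

/-- The rank-one convex envelope of `W` on GL⁺(2). -/
def RWenv (W : Mat2 → ℝ) (F : Mat2) : ℝ :=
  sSup {y | ∃ w : Mat2 → ℝ, RankOneConvex w ∧ (∀ X : Mat2, 0 < X.det → w X ≤ W X) ∧ y = w F}

/-- The quasiconvex envelope of `W` on GL⁺(2). -/
def QWenv (W : Mat2 → ℝ) (F : Mat2) : ℝ :=
  sSup {y | ∃ w : Mat2 → ℝ, Quasiconvex2 w ∧ (∀ X : Mat2, 0 < X.det → w X ≤ W X) ∧ y = w F}

/-- The polyconvex envelope of `W` on GL⁺(2). -/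
def PWenv (W : Mat2 → ℝ) (F : Mat2) : ℝ :=
  sSup {y | ∃ w : Mat2 → ℝ, Polyconvex w ∧ (∀ X : Mat2, 0 < X.det → w X ≤ W X) ∧ y = w F}

/-- The monotone-convex envelope of `h : [1,∞) → ℝ`. -/
def CmEnv (h : ℝ → ℝ) (t : ℝ) : ℝ :=
  sSup {y | ∃ p : ℝ → ℝ, ConvexOn ℝ (Set.Ici (1 : ℝ)) p ∧ MonotoneOn p (Set.Ici (1 : ℝ)) ∧
    (∀ s : ℝ, 1 ≤ s → p s ≤ h s) ∧ y = p t}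

/-- The convex envelope of `h : [1,∞) → ℝ`. -/
def CEnv (h : ℝ → ℝ) (t : ℝ) : ℝ :=
  sSup {y | ∃ p : ℝ → ℝ, ConvexOn ℝ (Set.Ici (1 : ℝ)) p ∧
    (∀ s : ℝ, 1 ≤ s → p s ≤ h s) ∧ y = p t}

/-- The special orthogonal group SO(n). -/
def SOnN {n : ℕ} (R : Matrix (Fin n) (Fin n) ℝ) : Prop := R.transpose * R = 1 ∧ R.det = 1

/-- The conformal special orthogonal group CSO(n) = (0,∞)·SO(n). -/
def CSOnN {n : ℕ} (A : Matrix (Fin n) (Fin n) ℝ) : Prop :=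
  ∃ a : ℝ, 0 < a ∧ ∃ R : Matrix (Fin n) (Fin n) ℝ, SOnN R ∧ A = a • R

/-- Conformal invariance of an energy `W : GL⁺(n) → ℝ`. -/
def ConfInvN {n : ℕ} (W : Matrix (Fin n) (Fin n) ℝ → ℝ) : Prop :=
  ∀ F : Matrix (Fin n) (Fin n) ℝ, 0 < F.det →
    ∀ A B : Matrix (Fin n) (Fin n) ℝ, CSOnN A → CSOnN B → W (A * F * B) = W F

/-- Rank-one convexity of an energy on GL⁺(n). -/
def RankOneConvexN {n : ℕ} (W : Matrix (Fin n) (Fin n) ℝ → ℝ) : Prop :=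
  ∀ F : Matrix (Fin n) (Fin n) ℝ, 0 < F.det →
    ∀ H : Matrix (Fin n) (Fin n) ℝ, H.rank = 1 → 0 < (F + H).det →
    ∀ t : ℝ, 0 ≤ t → t ≤ 1 → W (F + t • H) ≤ (1 - t) * W F + t * W (F + H)

/-- The gradient (Jacobian matrix) of a map ϑ : ℝⁿ → ℝⁿ. -/
def gradMatN {n : ℕ} (ϑ : (Fin n → ℝ) → (Fin n → ℝ)) (x : Fin n → ℝ) :
    Matrix (Fin n) (Fin n) ℝ :=
  Matrix.of fun i j => fderiv ℝ ϑ x (Pi.single j 1) i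

/-- Quasiconvexity of an energy on GL⁺(n). -/
def QuasiconvexN {n : ℕ} (W : Matrix (Fin n) (Fin n) ℝ → ℝ) : Prop :=
  ∀ Ω : Set (Fin n → ℝ), IsOpen Ω → Bornology.IsBounded Ω →
    ∀ F₀ : Matrix (Fin n) (Fin n) ℝ, 0 < F₀.det →
    ∀ ϑ : (Fin n → ℝ) → (Fin n → ℝ), ContDiff ℝ (⊤ : ℕ∞) ϑ → HasCompactSupport ϑ →
      tsupport ϑ ⊆ Ω → (∀ x ∈ Ω, 0 < (F₀ + gradMatN ϑ x).det) →
      W F₀ * (volume Ω).toReal ≤ ∫ x in Ω, W (F₀ + gradMatN ϑ x)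

/-- The rank-one convex envelope of `W` on GL⁺(n). -/
def RWenvN {n : ℕ} (W : Matrix (Fin n) (Fin n) ℝ → ℝ) (F : Matrix (Fin n) (Fin n) ℝ) : ℝ :=
  sSup {y | ∃ w : Matrix (Fin n) (Fin n) ℝ → ℝ, RankOneConvexN w ∧
    (∀ X : Matrix (Fin n) (Fin n) ℝ, 0 < X.det → w X ≤ W X) ∧ y = w F}

/-- The quasiconvex envelope of `W` on GL⁺(n). -/
def QWenvN {n : ℕ} (W : Matrix (Fin n) (Fin n) ℝ → ℝ) (F : Matrix (Fin n) (Fin n) ℝ) : ℝ :=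
  sSup {y | ∃ w : Matrix (Fin n) (Fin n) ℝ → ℝ, QuasiconvexN w ∧
    (∀ X : Matrix (Fin n) (Fin n) ℝ, 0 < X.det → w X ≤ W X) ∧ y = w F}

end
/-- A function `h : (0,∞) → ℝ` with `h(x) = h(1/x)` is convex on `(0,∞)`
if and only if it is convex and nondecreasing on `[1,∞)`. -/
theorem convex_iff_convex_monotone_on_Ici (h : ℝ → ℝ)
    (hsym : ∀ x : ℝ, 0 < x → h x = h x⁻¹) :
    ConvexOn ℝ (Set.Ioi (0 : ℝ)) h ↔
      ConvexOn ℝ (Set.Ici (1 : ℝ)) h ∧ MonotoneOn h (Set.Ici (1 : ℝ)) := by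
  constructor
  · intro hc
    refine ⟨hc.subset (fun x hx => Set.mem_Ioi.2 (lt_of_lt_of_le one_pos hx)) (convex_Ici 1), ?_⟩
    intro x hx y hy hxy
    have hy0 : (0:ℝ) < y := lt_of_lt_of_le one_pos hy
    have h1 : y⁻¹ ≤ x := le_trans (inv_le_one_of_one_le₀ hy) hx
    have hseg : x ∈ segment ℝ (y⁻¹) y := by
      rw [segment_eq_Icc (h1.trans hxy)]
      exact ⟨h1, hxy⟩
    have := hc.le_on_segment (Set.mem_Ioi.2 (inv_pos.2 hy0)) (Set.mem_Ioi.2 hy0) hseg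
    rwa [← hsym y hy0, max_self] at this
  · rintro ⟨hconv, hmono⟩
    set m : ℝ → ℝ := fun x => max x x⁻¹ with hm
    have hmge : ∀ x : ℝ, 0 < x → 1 ≤ m x := by
      intro x hx
      rcases le_total 1 x with hle | hle
      · exact le_max_of_le_left hle
      · exact le_max_of_le_right ((one_le_inv₀ hx).mpr hle)
    have himg : m '' (Set.Ioi (0:ℝ)) = Set.Ici 1 := by
      ext y; constructor
      · rintro ⟨x, hx, rfl⟩
        exact hmge x hx
      · intro hy
        refine ⟨y, Set.mem_Ioi.2 (lt_of_lt_of_le one_pos hy), ?_⟩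
        simp only [hm]
        exact max_eq_left ((inv_le_one_of_one_le₀ hy).trans hy)
    have hinv : ConvexOn ℝ (Set.Ioi (0:ℝ)) (fun x : ℝ => x⁻¹) := by
      have := convexOn_zpow (𝕜 := ℝ) (-1)
      simpa using this
    have hmconv : ConvexOn ℝ (Set.Ioi (0:ℝ)) m := convexOn_id (convex_Ioi 0) |>.sup hinv
    have hconv' : ConvexOn ℝ (m '' Set.Ioi (0:ℝ)) h := himg ▸ hconv
    have hmono' : MonotoneOn h (m '' Set.Ioi (0:ℝ)) := himg ▸ hmono
    have hcomp : ConvexOn ℝ (Set.Ioi (0:ℝ)) (h ∘ m) := hconv'.comp hmconv hmono'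
    have heq : ∀ x : ℝ, x ∈ Set.Ioi (0:ℝ) → h x = (h ∘ m) x := by
      intro x hx
      rcases le_total 1 x with hle | hle
      · simp only [Function.comp, hm, max_eq_left ((inv_le_one_of_one_le₀ hle).trans hle)]
      · have : m x = x⁻¹ := max_eq_right (hle.trans ((one_le_inv₀ hx).mpr hle))
        simp only [Function.comp, this]
        exact hsym x hx
    refine ⟨convex_Ioi 0, fun x hx y hy a b ha hb hab => ?_⟩
    rw [heq x hx, heq y hy, heq _ (hcomp.1 hx hy ha hb hab)]
    exact hcomp.2 hx hy ha hb hab
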